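/- Let Conv_≥(ℕ × ℕ) be the set of closed convex subsets C of the quadrant Q = ℝ≥0 × ℝ≥0 such that C + Q = C and all extreme points of C lie in ℕ × ℕ. With addition C ⊕ C' := closed convex hull of C ∪ C' and multiplication C ⊙ C' := C + C' (Minkowski sum), Conv_≥(ℕ × ℕ) is a multiplicatively cancellative semiring: if A ⊙ B = A ⊙ C with A nonempty, then B = C. In particular, for nonempty closed convex upward-saturated sets in the quadrant, Minkowski addition is cancellative. -/
import Mathlib


open Pointwise

/-- The positive quadrant in ℝ². -/
def Quad : Set (ℝ × ℝ) := {p : ℝ × ℝ | 0 ≤ p.1 ∧ 0 ≤ p.2}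

/-- Membership in Conv_≥(ℕ × ℕ): ∅, or a closed convex subset C of the quadrant with
C + Q = C whose extreme points have natural-number coordinates. -/
def IsConvGE (C : Set (ℝ × ℝ)) : Prop :=
  C = ∅ ∨ (C ⊆ Quad ∧ IsClosed C ∧ Convex ℝ C ∧ C + Quad = C ∧
    Set.extremePoints ℝ C ⊆ {p : ℝ × ℝ | ∃ a b : ℕ, p = ((a : ℝ), (b : ℝ))})

lemma quad_smul {t : ℝ} (ht : 0 ≤ t) {q : ℝ × ℝ} (hq : q ∈ Quad) : t • q ∈ Quad :=
  ⟨mul_nonneg ht hq.1, mul_nonneg ht hq.2⟩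

lemma sInf_set_add {S T : Set ℝ} (hS : S.Nonempty) (hT : T.Nonempty)
    (hSb : BddBelow S) (hTb : BddBelow T) : sInf (S + T) = sInf S + sInf T := by
  obtain ⟨mS, hmS⟩ := hSb
  obtain ⟨mT, hmT⟩ := hTb
  have hSTb : BddBelow (S + T) := ⟨mS + mT, by
    rintro x ⟨s, hs, t, ht, rfl⟩
    exact add_le_add (hmS hs) (hmT ht)⟩
  apply le_antisymm
  · -- sInf (S+T) ≤ sInf S + sInf T
    refine le_of_forall_pos_le_add fun ε hε => ?_
    obtain ⟨s, hs, hs'⟩ := Real.lt_sInf_add_pos hS (half_pos hε)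
    obtain ⟨t, ht, ht'⟩ := Real.lt_sInf_add_pos hT (half_pos hε)
    have : s + t ∈ S + T := ⟨s, hs, t, ht, rfl⟩
    have h1 : sInf (S + T) ≤ s + t := csInf_le hSTb this
    linarith
  · refine le_csInf (hS.add hT) ?_
    rintro x ⟨s, hs, t, ht, rfl⟩
    exact add_le_add (csInf_le ⟨mS, hmS⟩ hs) (csInf_le ⟨mT, hmT⟩ ht)

lemma subset_of_minkowski {A B C : Set (ℝ × ℝ)} (hAQ : A ⊆ Quad) (hBQ : B ⊆ Quad)
    (hCc : IsClosed C) (hCv : Convex ℝ C) (hCq : C + Quad = C)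
    (hAne : A.Nonempty) (hCne : C.Nonempty) (h : A + B = A + C) : B ⊆ C := by
  intro b hb
  by_contra hbC
  obtain ⟨f, u, hu1, hu2⟩ := geometric_hahn_banach_point_closed hCv hCc hbC
  obtain ⟨x0, hx0⟩ := hCne
  -- f is nonnegative on Quad
  have hfQ : ∀ q ∈ Quad, 0 ≤ f q := by
    intro q hq
    by_contra hneg
    push_neg at hneg
    set t : ℝ := (f x0 - u + 1) / (-f q) with ht_def
    have hfq : 0 < -f q := by linarith
    have hnum : 0 < f x0 - u + 1 := by have := hu2 x0 hx0; linarith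
    have ht : 0 ≤ t := le_of_lt (div_pos hnum hfq)
    have hx : x0 + t • q ∈ C := by
      rw [← hCq]; exact ⟨x0, hx0, t • q, quad_smul ht hq, rfl⟩
    have h2 := hu2 _ hx
    rw [map_add, map_smul] at h2
    have h3 : t * (-f q) = f x0 - u + 1 := div_mul_cancel₀ _ (ne_of_gt hfq)
    simp only [smul_eq_mul] at h2
    nlinarith
  have hBne : B.Nonempty := ⟨b, hb⟩
  have hCne' : C.Nonempty := ⟨x0, hx0⟩
  have hAb : BddBelow (f '' A) := ⟨0, by rintro x ⟨a, ha, rfl⟩; exact hfQ a (hAQ ha)⟩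
  have hBb : BddBelow (f '' B) := ⟨0, by rintro x ⟨a, ha, rfl⟩; exact hfQ a (hBQ ha)⟩
  have hCb : BddBelow (f '' C) := ⟨u, by rintro x ⟨c, hc, rfl⟩; exact (hu2 c hc).le⟩
  have himB : f '' (A + B) = f '' A + f '' B := Set.image_add f
  have himC : f '' (A + C) = f '' A + f '' C := Set.image_add f
  have e1 : sInf (f '' A) + sInf (f '' B) = sInf (f '' A) + sInf (f '' C) := by
    rw [← sInf_set_add (hAne.image f) (hBne.image f) hAb hBb,
      ← sInf_set_add (hAne.image f) (hCne'.image f) hAb hCb, ← himB, ← himC, h]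
  have key : sInf (f '' B) = sInf (f '' C) := by linarith
  have h2 : sInf (f '' B) ≤ f b := csInf_le hBb ⟨b, hb, rfl⟩
  have h3 : u ≤ sInf (f '' C) := le_csInf (hCne'.image f) (by rintro x ⟨c, hc, rfl⟩; exact (hu2 c hc).le)
  linarith

theorem stmt12 (A B C : Set (ℝ × ℝ)) (hA : IsConvGE A) (hB : IsConvGE B) (hC : IsConvGE C)
    (hAne : A.Nonempty) (h : A + B = A + C) : B = C := by
  rcases hB with rfl | ⟨hBQ, hBc, hBv, hBq, -⟩
  · rcases hC with rfl | ⟨-, -, -, -, -⟩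
    · rfl
    by_contra hne
    have hCne : C.Nonempty := Set.nonempty_iff_ne_empty.2 (Ne.symm hne)
    have : (A + C).Nonempty := hAne.add hCne
    rw [← h] at this
    simp at this
  rcases hC with rfl | ⟨hCQ, hCc, hCv, hCq, -⟩
  · by_contra hne
    have hBne : B.Nonempty := Set.nonempty_iff_ne_empty.2 hne
    have : (A + B).Nonempty := hAne.add hBne
    rw [h] at this
    simp at this
  have hAQ : A ⊆ Quad := by
    rcases hA with rfl | ⟨hAQ, -, -, -, -⟩
    · exact absurd rfl (Set.nonempty_iff_ne_empty.1 hAne)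
    · exact hAQ
  rcases B.eq_empty_or_nonempty with rfl | hBne
  · rcases C.eq_empty_or_nonempty with rfl | hCne
    · rfl
    · exfalso
      have : (A + C).Nonempty := hAne.add hCne
      rw [← h] at this; simp at this
  have hCne : C.Nonempty := by
    by_contra hne
    rw [Set.not_nonempty_iff_eq_empty] at hne
    subst hne
    have : (A + B).Nonempty := hAne.add hBne
    rw [h] at this; simp at this
  exact Set.Subset.antisymm
    (subset_of_minkowski hAQ hBQ hCc hCv hCq hAne hCne h)
    (subset_of_minkowski hAQ hCQ hBc hBv hBq hAne hBne h.symm)
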